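/- (Theorem 2, exact white-signal case) Let n ≥ 1, let σ₁, …, σₙ be nonnegative reals with at least one σᵢ > 0, and let σ_z > 0 and σ_x > 0. Define MSE(ρ) = Σᵢ₌₁ⁿ (σ_z²σᵢ² + σ_x²ρ²)/(σᵢ² + ρ)² for ρ > 0. Then ρ⋆ = σ_z²/σ_x² is the unique global minimizer of MSE on (0, ∞): MSE(ρ⋆) < MSE(ρ) for every ρ > 0 with ρ ≠ ρ⋆. -/

import Mathlib

lemma aux_term (σx r ρ s : ℝ) (hσx : 0 < σx) (hr : 0 < r) (hρ : 0 < ρ) (hs : 0 ≤ s) :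
    (σx ^ 2 * r * s + σx ^ 2 * r ^ 2) / (s + r) ^ 2
      ≤ (σx ^ 2 * r * s + σx ^ 2 * ρ ^ 2) / (s + ρ) ^ 2 := by
  rw [div_le_div_iff₀ (by positivity) (by positivity)]
  nlinarith [mul_nonneg (mul_nonneg (mul_nonneg (sq_nonneg σx) (by linarith : (0:ℝ) ≤ s + r)) hs) (sq_nonneg (ρ - r))]

lemma aux_term_strict (σx r ρ s : ℝ) (hσx : 0 < σx) (hr : 0 < r) (hρ : 0 < ρ) (hs : 0 < s)
    (hne : ρ ≠ r) :
    (σx ^ 2 * r * s + σx ^ 2 * r ^ 2) / (s + r) ^ 2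
      < (σx ^ 2 * r * s + σx ^ 2 * ρ ^ 2) / (s + ρ) ^ 2 := by
  rw [div_lt_div_iff₀ (by positivity) (by positivity)]
  have hd : ρ - r ≠ 0 := sub_ne_zero.mpr hne
  have h : 0 < (ρ - r) ^ 2 := by positivity
  nlinarith [mul_pos (mul_pos (mul_pos (pow_pos hσx 2) (by linarith : (0:ℝ) < s + r)) hs) h]

/-- (Theorem 2, exact white-signal case) For
`MSE(ρ) = Σᵢ (σ_z²σᵢ² + σ_x²ρ²)/(σᵢ² + ρ)²`, the point `ρ⋆ = σ_z²/σ_x²` is the unique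
global minimizer on `(0, ∞)`. -/
theorem stmt_7 (n : ℕ) (hn : 1 ≤ n) (σ : ℕ → ℝ)
    (hσ : ∀ i < n, 0 ≤ σ i) (hex : ∃ i < n, 0 < σ i)
    (σz σx : ℝ) (hσz : 0 < σz) (hσx : 0 < σx) :
    ∀ ρ : ℝ, 0 < ρ → ρ ≠ σz ^ 2 / σx ^ 2 →
      ∑ i ∈ Finset.range n,
          (σz ^ 2 * σ i ^ 2 + σx ^ 2 * (σz ^ 2 / σx ^ 2) ^ 2) /
            (σ i ^ 2 + σz ^ 2 / σx ^ 2) ^ 2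
        < ∑ i ∈ Finset.range n,
            (σz ^ 2 * σ i ^ 2 + σx ^ 2 * ρ ^ 2) / (σ i ^ 2 + ρ) ^ 2 := by
  intro ρ hρ hne
  set r : ℝ := σz ^ 2 / σx ^ 2 with hrdef
  have hr : 0 < r := by positivity
  have hz : σz ^ 2 = σx ^ 2 * r := by
    rw [hrdef]; field_simp
  obtain ⟨j, hjn, hjpos⟩ := hex
  apply Finset.sum_lt_sum
  · intro i hi
    rw [hz]
    exact aux_term σx r ρ (σ i ^ 2) hσx hr hρ (sq_nonneg _)
  · refine ⟨j, Finset.mem_range.mpr hjn, ?_⟩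
    rw [hz]
    exact aux_term_strict σx r ρ (σ j ^ 2) hσx hr hρ (by positivity) hne
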